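/- Let f : [0, 𝔠] → ℝ be Lipschitz with f(0) ≤ 0 ≤ f(𝔠), let s > 0, and let f̂ denote the extension of f to ℝ with constant values f(0) on (-∞, 0] and f(𝔠) on [𝔠, ∞). If ρ ∈ C²([0,1]) solves ρ'' = s² f̂(ρ), ρ(0) = 0, ρ(1) = 𝔠, then 0 < ρ(y) < 𝔠 for all y ∈ (0,1). -/

import Mathlib

open Set

/-- A solution of an autonomous ODE passing through a zero of the (Lipschitz)
vector field is constant. -/
private lemma ode_const {E : Type*} [NormedAddCommGroup E] [NormedSpace ℝ E]
    {V : E → E} {L : NNReal} (hV : LipschitzWith L V) {g : ℝ → E} {a b t₀ : ℝ}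
    (ht : t₀ ∈ Set.Ioo a b)
    (hg : ∀ t ∈ Set.Icc a b, HasDerivAt g (V (g t)) t)
    (h0 : V (g t₀) = 0) : ∀ t ∈ Set.Icc a b, g t = g t₀ := by
  have hcont : ContinuousOn g (Set.Icc a b) :=
    fun t htab => (hg t htab).continuousAt.continuousWithinAt
  have huniq := ODE_solution_unique_of_mem_Icc (v := fun _ x => V x)
    (s := fun _ => Set.univ) (K := L) (g := fun _ => g t₀)
    (fun _ _ => (hV.lipschitzOnWith : LipschitzOnWith L V Set.univ)) ht hcont
    (fun t ht' => hg t (Set.Ioo_subset_Icc_self ht')) (fun _ _ => Set.mem_univ _)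
    continuousOn_const
    (fun t _ => by simpa [h0] using hasDerivAt_const t (g t₀))
    (fun _ _ => Set.mem_univ _) rfl
  exact fun t htab => huniq htab

/-- If `ρ'(y₀) = 0` and `ρ''(y₀) > 0` at an interior point, then `ρ` takes a value
strictly larger than `ρ y₀` somewhere on `[0,1]`. -/
private lemma push_up {ρ ρ' ρ'' : ℝ → ℝ} {y₀ : ℝ} (hy₀ : y₀ ∈ Set.Ioo (0:ℝ) 1)
    (hρ1 : ∀ y ∈ Set.Icc (0:ℝ) 1, HasDerivAt ρ (ρ' y) y)
    (hρ2 : ∀ y ∈ Set.Icc (0:ℝ) 1, HasDerivAt ρ' (ρ'' y) y)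
    (hρc : ContinuousOn ρ'' (Set.Icc 0 1))
    (h0 : ρ' y₀ = 0) (hpos : 0 < ρ'' y₀) :
    ∃ t ∈ Set.Icc (0:ℝ) 1, ρ y₀ < ρ t := by
  have hy₀I : y₀ ∈ Set.Icc (0:ℝ) 1 := Set.Ioo_subset_Icc_self hy₀
  have hnhds : Set.Icc (0:ℝ) 1 ∈ nhds y₀ := Icc_mem_nhds hy₀.1 hy₀.2
  have hca : ContinuousAt ρ'' y₀ := (hρc y₀ hy₀I).continuousAt hnhds
  have hev : ∀ᶠ t in nhds y₀, 0 < ρ'' t := hca.eventually (eventually_gt_nhds hpos)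
  have hmem : ∀ᶠ t in nhds y₀, t ∈ Set.Icc (0:ℝ) 1 := hnhds
  obtain ⟨ε, hε, hball⟩ := Metric.eventually_nhds_iff.mp (hev.and hmem)
  set δ : ℝ := min (ε / 2) (1 - y₀) with hδdef
  have hδ : 0 < δ := lt_min (by linarith) (by linarith [hy₀.2])
  have key : ∀ t ∈ Set.Icc y₀ (y₀ + δ), 0 < ρ'' t ∧ t ∈ Set.Icc (0:ℝ) 1 := by
    intro t ht
    apply hball
    rw [Real.dist_eq, abs_of_nonneg (by linarith [ht.1])]
    have h1 : t - y₀ ≤ δ := by linarith [ht.2]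
    have h2 : δ ≤ ε / 2 := min_le_left _ _
    linarith
  have hmono' : StrictMonoOn ρ' (Set.Icc y₀ (y₀ + δ)) := by
    apply strictMonoOn_of_deriv_pos (convex_Icc _ _)
    · exact fun t ht => (hρ2 t (key t ht).2).continuousAt.continuousWithinAt
    · intro t ht
      rw [interior_Icc] at ht
      have htI : t ∈ Set.Icc y₀ (y₀ + δ) := Set.Ioo_subset_Icc_self ht
      rw [(hρ2 t (key t htI).2).deriv]
      exact (key t htI).1
  have hmono : StrictMonoOn ρ (Set.Icc y₀ (y₀ + δ)) := by
    apply strictMonoOn_of_deriv_pos (convex_Icc _ _)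
    · exact fun t ht => (hρ1 t (key t ht).2).continuousAt.continuousWithinAt
    · intro t ht
      rw [interior_Icc] at ht
      have htI : t ∈ Set.Icc y₀ (y₀ + δ) := Set.Ioo_subset_Icc_self ht
      rw [(hρ1 t (key t htI).2).deriv]
      have := hmono' (Set.left_mem_Icc.mpr (by linarith)) htI ht.1
      rw [h0] at this
      exact this
  refine ⟨y₀ + δ, (key _ (Set.right_mem_Icc.mpr (by linarith))).2, ?_⟩
  exact hmono (Set.left_mem_Icc.mpr (by linarith))
    (Set.right_mem_Icc.mpr (by linarith)) (by linarith)

/-- If `f` is Lipschitz on `[0,𝔠]` with `f(0) ≤ 0 ≤ f(𝔠)`, `f̂` is its constant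
extension to `ℝ`, and `ρ ∈ C²([0,1])` solves `ρ'' = s² f̂(ρ)`, `ρ(0) = 0`, `ρ(1) = 𝔠`,
then `0 < ρ < 𝔠` on `(0,1)`. -/
theorem stmt_7 (𝔠 s : ℝ) (h𝔠 : 0 < 𝔠) (hs : 0 < s)
    (f : ℝ → ℝ) (K : NNReal) (hf : LipschitzOnWith K f (Set.Icc 0 𝔠))
    (hsign : f 0 ≤ 0 ∧ 0 ≤ f 𝔠)
    (fhat : ℝ → ℝ)
    (hfhat : ∀ t : ℝ, fhat t =
      if t ≤ 0 then f 0 else if t < 𝔠 then f t else f 𝔠)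
    (ρ ρ' ρ'' : ℝ → ℝ)
    (hρ1 : ∀ y ∈ Set.Icc (0:ℝ) 1, HasDerivAt ρ (ρ' y) y)
    (hρ2 : ∀ y ∈ Set.Icc (0:ℝ) 1, HasDerivAt ρ' (ρ'' y) y)
    (hρc : ContinuousOn ρ'' (Set.Icc 0 1))
    (heq : ∀ y ∈ Set.Icc (0:ℝ) 1, ρ'' y = s ^ 2 * fhat (ρ y))
    (hb0 : ρ 0 = 0) (hb1 : ρ 1 = 𝔠) :
    ∀ y ∈ Set.Ioo (0:ℝ) 1, 0 < ρ y ∧ ρ y < 𝔠 := by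
  have h0I : (0:ℝ) ∈ Set.Icc (0:ℝ) 1 := Set.left_mem_Icc.mpr zero_le_one
  have h1I : (1:ℝ) ∈ Set.Icc (0:ℝ) 1 := Set.right_mem_Icc.mpr zero_le_one
  have hcρ : ContinuousOn ρ (Set.Icc 0 1) :=
    fun t ht => (hρ1 t ht).continuousAt.continuousWithinAt
  -- `fhat` is globally Lipschitz with constant `K`
  have hfhat' : ∀ t, fhat t = (Set.Icc 0 𝔠).restrict f (Set.projIcc 0 𝔠 h𝔠.le t) := by
    intro t
    rw [hfhat]
    rcases le_or_gt t 0 with h | h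
    · rw [if_pos h, Set.projIcc_of_le_left _ h]; rfl
    · rcases lt_or_ge t 𝔠 with h2 | h2
      · rw [if_neg (not_le.mpr h), if_pos h2, Set.projIcc_of_mem _ ⟨h.le, h2.le⟩]; rfl
      · rw [if_neg (not_le.mpr h), if_neg (not_lt.mpr h2), Set.projIcc_of_right_le _ h2]; rfl
  have hfhatL : LipschitzWith K fhat := by
    have hE : fhat = (Set.Icc 0 𝔠).restrict f ∘ Set.projIcc 0 𝔠 h𝔠.le := funext hfhat'
    rw [hE]
    exact (mul_one K) ▸ hf.to_restrict.comp (LipschitzWith.projIcc h𝔠.le)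
  -- the first-order system vector field
  set V : ℝ × ℝ → ℝ × ℝ := fun q => (q.2, s ^ 2 * fhat q.1) with hVdef
  have h2L : LipschitzWith (⟨s ^ 2, sq_nonneg s⟩ * K) (fun q : ℝ × ℝ => s ^ 2 * fhat q.1) := by
    apply LipschitzWith.of_dist_le_mul
    intro x y
    have hfst : dist x.1 y.1 ≤ dist x y := by
      simpa using LipschitzWith.prod_fst.dist_le_mul x y
    have hd : dist (fhat x.1) (fhat y.1) ≤ K * dist x.1 y.1 := hfhatL.dist_le_mul x.1 y.1
    have hcoe : ((⟨s ^ 2, sq_nonneg s⟩ * K : NNReal) : ℝ) = s ^ 2 * (K : ℝ) := by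
      push_cast; rfl
    rw [hcoe]
    calc dist (s ^ 2 * fhat x.1) (s ^ 2 * fhat y.1)
        = s ^ 2 * dist (fhat x.1) (fhat y.1) := by
          rw [Real.dist_eq, Real.dist_eq, ← mul_sub, abs_mul, abs_of_nonneg (sq_nonneg s)]
      _ ≤ s ^ 2 * (K * dist x y) := by
          apply mul_le_mul_of_nonneg_left _ (sq_nonneg s)
          exact hd.trans (mul_le_mul_of_nonneg_left hfst K.coe_nonneg)
      _ = s ^ 2 * (K : ℝ) * dist x y := by ring
  have hV : LipschitzWith (max 1 (⟨s ^ 2, sq_nonneg s⟩ * K)) V :=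
    LipschitzWith.prod_snd.prodMk h2L
  -- the solution of the first-order system
  set g : ℝ → ℝ × ℝ := fun y => (ρ y, ρ' y) with hgdef
  have hg : ∀ t ∈ Set.Icc (0:ℝ) 1, HasDerivAt g (V (g t)) t := by
    intro t ht
    have h := (hρ1 t ht).prodMk (hρ2 t ht)
    rw [heq t ht] at h
    exact h
  -- upper bound: no interior maximum point with value ≥ 𝔠
  have keyU : ∀ y₀ ∈ Set.Ioo (0:ℝ) 1, IsMaxOn ρ (Set.Icc 0 1) y₀ → 𝔠 ≤ ρ y₀ → False := by
    intro y₀ hy₀ hmax hge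
    have hy₀I : y₀ ∈ Set.Icc (0:ℝ) 1 := Set.Ioo_subset_Icc_self hy₀
    have hlocmax : IsLocalMax ρ y₀ :=
      Filter.eventually_of_mem (Icc_mem_nhds hy₀.1 hy₀.2)
        (fun x hx => isMaxOn_iff.mp hmax x hx)
    have hd0 : ρ' y₀ = 0 := hlocmax.hasDerivAt_eq_zero (hρ1 y₀ hy₀I)
    have hfval : fhat (ρ y₀) = f 𝔠 := by
      rw [hfhat, if_neg (not_le.mpr (lt_of_lt_of_le h𝔠 hge)), if_neg (not_lt.mpr hge)]
    have hf𝔠 : f 𝔠 = 0 := by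
      by_contra hne
      have hpos : 0 < f 𝔠 := hsign.2.lt_of_ne (Ne.symm hne)
      have hpp : 0 < ρ'' y₀ := by
        rw [heq y₀ hy₀I, hfval]; positivity
      obtain ⟨t, htI, hlt⟩ := push_up hy₀ hρ1 hρ2 hρc hd0 hpp
      exact absurd (isMaxOn_iff.mp hmax t htI) (not_le.mpr hlt)
    have hVz : V (g y₀) = 0 := by
      simp [hVdef, hgdef, hd0, hfval, hf𝔠, Prod.ext_iff]
    have hconst := ode_const hV hy₀ hg hVz
    have h0 : ρ 0 = ρ y₀ := congrArg Prod.fst (hconst 0 h0I)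
    rw [hb0] at h0
    linarith
  -- lower bound: no interior minimum point with value ≤ 0
  have keyL : ∀ y₀ ∈ Set.Ioo (0:ℝ) 1, IsMinOn ρ (Set.Icc 0 1) y₀ → ρ y₀ ≤ 0 → False := by
    intro y₀ hy₀ hmin hle
    have hy₀I : y₀ ∈ Set.Icc (0:ℝ) 1 := Set.Ioo_subset_Icc_self hy₀
    have hlocmin : IsLocalMin ρ y₀ :=
      Filter.eventually_of_mem (Icc_mem_nhds hy₀.1 hy₀.2)
        (fun x hx => isMinOn_iff.mp hmin x hx)
    have hd0 : ρ' y₀ = 0 := hlocmin.hasDerivAt_eq_zero (hρ1 y₀ hy₀I)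
    have hfval : fhat (ρ y₀) = f 0 := by
      rw [hfhat, if_pos hle]
    have hf0 : f 0 = 0 := by
      by_contra hne
      have hneg : f 0 < 0 := hsign.1.lt_of_ne hne
      have hpp : 0 < -ρ'' y₀ := by
        rw [heq y₀ hy₀I, hfval]; nlinarith [sq_nonneg s, pow_pos hs 2]
      obtain ⟨t, htI, hlt⟩ := push_up (ρ := fun x => -ρ x) (ρ' := fun x => -ρ' x)
        (ρ'' := fun x => -ρ'' x) hy₀
        (fun y hy => (hρ1 y hy).neg) (fun y hy => (hρ2 y hy).neg) hρc.neg
        (by simp [hd0]) hpp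
      have : ρ t < ρ y₀ := by simpa using hlt
      exact absurd (isMinOn_iff.mp hmin t htI) (not_le.mpr this)
    have hVz : V (g y₀) = 0 := by
      simp [hVdef, hgdef, hd0, hfval, hf0, Prod.ext_iff]
    have hconst := ode_const hV hy₀ hg hVz
    have h1 : ρ 1 = ρ y₀ := congrArg Prod.fst (hconst 1 h1I)
    rw [hb1] at h1
    linarith
  -- conclude the strict upper bound on the interior
  have hub : ∀ y ∈ Set.Ioo (0:ℝ) 1, ρ y < 𝔠 := by
    intro y hy
    by_contra hge'
    push_neg at hge'
    obtain ⟨z, hz, hmax⟩ := isCompact_Icc.exists_isMaxOn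
      (Set.nonempty_Icc.mpr zero_le_one) hcρ
    by_cases hzI : z ∈ Set.Ioo (0:ℝ) 1
    · exact keyU z hzI hmax
        (le_trans hge' (isMaxOn_iff.mp hmax y (Set.Ioo_subset_Icc_self hy)))
    · have hz01 : z = 0 ∨ z = 1 := by
        rcases hz with ⟨hz1, hz2⟩
        rcases eq_or_lt_of_le hz1 with h | h
        · exact Or.inl h.symm
        · rcases eq_or_lt_of_le hz2 with h' | h'
          · exact Or.inr h'
          · exact absurd ⟨h, h'⟩ hzI
      have hρz : ρ z ≤ 𝔠 := by
        rcases hz01 with rfl | rfl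
        · rw [hb0]; exact h𝔠.le
        · rw [hb1]
      have hymax : IsMaxOn ρ (Set.Icc 0 1) y := by
        apply isMaxOn_iff.mpr
        intro t ht
        exact le_trans (isMaxOn_iff.mp hmax t ht) (le_trans hρz hge')
      exact keyU y hy hymax hge'
  -- conclude the strict lower bound on the interior
  have hlb : ∀ y ∈ Set.Ioo (0:ℝ) 1, 0 < ρ y := by
    intro y hy
    by_contra hle'
    push_neg at hle'
    obtain ⟨z, hz, hmin⟩ := isCompact_Icc.exists_isMinOn
      (Set.nonempty_Icc.mpr zero_le_one) hcρ
    by_cases hzI : z ∈ Set.Ioo (0:ℝ) 1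
    · exact keyL z hzI hmin
        (le_trans (isMinOn_iff.mp hmin y (Set.Ioo_subset_Icc_self hy)) hle')
    · have hz01 : z = 0 ∨ z = 1 := by
        rcases hz with ⟨hz1, hz2⟩
        rcases eq_or_lt_of_le hz1 with h | h
        · exact Or.inl h.symm
        · rcases eq_or_lt_of_le hz2 with h' | h'
          · exact Or.inr h'
          · exact absurd ⟨h, h'⟩ hzI
      have hρz : 0 ≤ ρ z := by
        rcases hz01 with rfl | rfl
        · rw [hb0]
        · rw [hb1]; exact h𝔠.le
      have hymin : IsMinOn ρ (Set.Icc 0 1) y := by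
        apply isMinOn_iff.mpr
        intro t ht
        exact le_trans (le_trans hle' hρz) (isMinOn_iff.mp hmin t ht)
      exact keyL y hy hymin hle'
  exact fun y hy => ⟨hlb y hy, hub y hy⟩
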